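/- Let (X,d) be a metric space endowed with a Borel measure μ, let m > 0, λ ∈ [0,m), p ∈ [1,∞) and C₁, C₂ > 0. Let G : (0,∞) × X × X → ℝ be measurable with 0 ≤ G(t,x,y) ≤ C₁ · t^{−m/2} · exp(−C₂ · d(x,y)²/t) for all t > 0 and x, y ∈ X, and with ∫_X G(t,x,y) dμ(y) ≤ 1 for all t > 0 and x ∈ X. Let u₀ : X → ℝ be measurable and N ≥ 0 with ∫_{B(x,R)} |u₀|^p dμ ≤ N^p R^λ for all x ∈ X and R > 0. Then there exists C > 0, depending only on C₁, C₂, m, λ and p, such that for every t > 0 and every x ∈ X: ∫_X G(t,x,y) |u₀(y)| dμ(y) ≤ C · t^{−(m−λ)/(2p)} · N. -/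

import Mathlib

open MeasureTheory

open scoped ENNReal NNReal

lemma aux_powmean {α : Type*} [MeasurableSpace α] (ν : Measure α) (hν : ν Set.univ ≤ 1)
    {p : ℝ} (hp : 1 ≤ p) (f : α → ℝ≥0∞) (hf : AEMeasurable f ν) :
    ∫⁻ a, f a ∂ν ≤ (∫⁻ a, f a ^ p ∂ν) ^ (1 / p) := by
  rcases eq_or_lt_of_le hp with h1 | h1
  · simp [← h1]
  · have hpq : p.HolderConjugate (Real.conjExponent p) := .conjExponent h1
    have h := ENNReal.lintegral_mul_le_Lp_mul_Lq ν hpq.symm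
      (aemeasurable_const (b := (1:ℝ≥0∞))) hf
    simp only [one_mul, Pi.mul_apply, Pi.one_apply] at h
    refine h.trans ?_
    have h2 : (∫⁻ _, (1:ℝ≥0∞) ^ Real.conjExponent p ∂ν) ^ (1 / Real.conjExponent p) ≤ 1 := by
      simp only [ENNReal.one_rpow, lintegral_const, one_mul]
      exact ENNReal.rpow_le_one hν hpq.symm.one_div_nonneg
    calc _ ≤ 1 * (∫⁻ a, f a ^ p ∂ν) ^ (1 / p) := mul_le_mul' h2 le_rfl
      _ = _ := one_mul _

lemma aux_summable {lam C₂ : ℝ} (hC₂ : 0 < C₂) :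
    Summable (fun k : ℕ => ((k : ℝ) + 1) ^ lam * Real.exp (-C₂ * (k : ℝ) ^ 2)) := by
  set n : ℕ := ⌈lam⌉₊ with hn
  set r : ℝ := Real.exp (-C₂) with hr
  have hr0 : 0 < r := Real.exp_pos _
  have hr1 : r < 1 := Real.exp_lt_one_iff.mpr (by linarith)
  have hbase : Summable (fun k : ℕ => (k : ℝ) ^ n * r ^ k) :=
    summable_pow_mul_geometric_of_norm_lt_one n (by rw [Real.norm_eq_abs, abs_of_pos hr0]; exact hr1)
  have hshift : Summable (fun k : ℕ => ((k : ℝ) + 1) ^ n * r ^ (k + 1)) := by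
    have h := hbase.comp_injective Nat.succ_injective
    refine h.congr fun k => ?_
    simp [Function.comp, Nat.succ_eq_add_one]
  have hg : Summable (fun k : ℕ => ((k : ℝ) + 1) ^ n * r ^ k) := by
    have := hshift.mul_left r⁻¹
    refine this.congr fun k => ?_
    field_simp [pow_succ]
    ring
  refine Summable.of_nonneg_of_le (fun k => ?_) (fun k => ?_) hg
  · positivity
  · have h1 : ((k : ℝ) + 1) ^ lam ≤ ((k : ℝ) + 1) ^ (n : ℝ) :=
      Real.rpow_le_rpow_of_exponent_le (le_add_of_nonneg_left (Nat.cast_nonneg k)) (Nat.le_ceil lam)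
    rw [Real.rpow_natCast] at h1
    have h2 : Real.exp (-C₂ * (k : ℝ) ^ 2) ≤ r ^ k := by
      rw [hr, ← Real.exp_nat_mul]
      refine Real.exp_le_exp.mpr ?_
      have : (k : ℝ) ≤ (k : ℝ) ^ 2 := by
        have := Nat.le_self_pow (two_ne_zero) k
        exact_mod_cast this
      nlinarith
    exact mul_le_mul h1 h2 (Real.exp_pos _).le (by positivity)

/-- Abstract form of the dispersive estimate `e^{tΔ_g} : M_{p,λ} → L^∞` with
decay `t^{-(m-λ)/(2p)}` on Ricci-flat manifolds (Theorem 7.1): a Markovian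
kernel with global Gaussian bound `C₁ t^{-m/2} e^{-C₂ d(x,y)²/t}` applied to
Morrey data. -/
theorem dispersive_Linfty_ricci_flat
    {X : Type*} [MetricSpace X] [MeasurableSpace X] [BorelSpace X]
    (μ : Measure X) (m lam p C₁ C₂ N : ℝ)
    (hm : 0 < m) (hlam0 : 0 ≤ lam) (hlamm : lam < m) (hp : 1 ≤ p)
    (hC₁ : 0 < C₁) (hC₂ : 0 < C₂)
    (G : ℝ → X → X → ℝ)
    (hGmeas : Measurable fun w : ℝ × X × X => G w.1 w.2.1 w.2.2)
    (hG0 : ∀ t > (0 : ℝ), ∀ x y : X, 0 ≤ G t x y)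
    (hGbd : ∀ t > (0 : ℝ), ∀ x y : X, G t x y ≤
      C₁ * t ^ (-(m / 2)) * Real.exp (-C₂ * dist x y ^ 2 / t))
    (hGmarkov : ∀ t > (0 : ℝ), ∀ x : X, ∫⁻ y, ENNReal.ofReal (G t x y) ∂μ ≤ 1)
    (u₀ : X → ℝ) (hu₀ : Measurable u₀) (hN : 0 ≤ N)
    (hmor : ∀ (x : X) (R : ℝ), 0 < R →
      ∫⁻ y in Metric.ball x R, ENNReal.ofReal (|u₀ y| ^ p) ∂μ ≤
        ENNReal.ofReal (N ^ p * R ^ lam)) :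
    ∃ C > (0 : ℝ), ∀ t > (0 : ℝ), ∀ x : X,
      ∫⁻ y, ENNReal.ofReal (G t x y * |u₀ y|) ∂μ ≤
        ENNReal.ofReal (C * t ^ (-((m - lam) / (2 * p))) * N) := by
  have hp0 : (0 : ℝ) < p := lt_of_lt_of_le one_pos hp
  set a : ℕ → ℝ := fun k => ((k : ℝ) + 1) ^ lam * Real.exp (-C₂ * (k : ℝ) ^ 2) with ha
  have haS : Summable a := aux_summable hC₂
  set S : ℝ := ∑' k, a k with hSdef
  have hanneg : ∀ k, 0 ≤ a k := fun k => by
    have : (0:ℝ) ≤ ((k:ℝ)+1) ^ lam := Real.rpow_nonneg (by positivity) _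
    exact mul_nonneg this (Real.exp_pos _).le
  have hS1 : (1 : ℝ) ≤ S := by
    have h0 : a 0 = 1 := by simp [ha]
    have := Summable.le_tsum haS 0 (fun j _ => hanneg j)
    rw [h0] at this; exact this
  have hS0 : (0 : ℝ) < S := lt_of_lt_of_le one_pos hS1
  refine ⟨(C₁ * S) ^ (1 / p), by positivity, ?_⟩
  intro t ht x
  set r : ℝ := Real.sqrt t with hrdef
  have hr : 0 < r := Real.sqrt_pos.mpr ht
  set g : X → ℝ≥0∞ := fun y => ENNReal.ofReal (G t x y) with hgdef
  set f : X → ℝ≥0∞ := fun y => ENNReal.ofReal |u₀ y| with hfdef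
  have hgm : Measurable g := by
    have : Measurable fun y : X => G t x y :=
      hGmeas.comp (measurable_const.prodMk (measurable_const.prodMk measurable_id))
    exact this.ennreal_ofReal
  have hfm : Measurable f := hu₀.abs.ennreal_ofReal
  have hfpm : Measurable fun y => ENNReal.ofReal (|u₀ y| ^ p) :=
    (hu₀.abs.pow measurable_const).ennreal_ofReal
  set B : ℝ := C₁ * t ^ (-(m / 2)) * (N ^ p * r ^ lam) with hBdef
  have hB0 : 0 ≤ B := by
    have : (0:ℝ) ≤ N ^ p := Real.rpow_nonneg hN _
    have h2 : (0:ℝ) ≤ r ^ lam := Real.rpow_nonneg hr.le _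
    have h3 : (0:ℝ) ≤ t ^ (-(m/2)) := Real.rpow_nonneg ht.le _
    positivity
  -- key annuli estimate
  have key : ∫⁻ y, ENNReal.ofReal (G t x y * |u₀ y| ^ p) ∂μ ≤ ENNReal.ofReal (B * S) := by
    set A : ℕ → Set X := fun k => Metric.ball x (((k : ℝ) + 1) * r) \ Metric.ball x ((k : ℝ) * r)
      with hA
    have hcover : (Set.univ : Set X) ⊆ ⋃ k, A k := by
      intro y _
      refine Set.mem_iUnion.mpr ⟨⌊dist y x / r⌋₊, ?_, ?_⟩
      · have h := Nat.lt_floor_add_one (dist y x / r)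
        rw [Metric.mem_ball]
        rw [div_lt_iff₀ hr] at h
        exact h
      · have h := Nat.floor_le (div_nonneg (dist_nonneg : (0:ℝ) ≤ dist y x) hr.le)
        rw [le_div_iff₀ hr] at h
        simp only [Metric.mem_ball, not_lt]
        exact h
    have hterm : ∀ k : ℕ, ∫⁻ y in A k, ENNReal.ofReal (G t x y * |u₀ y| ^ p) ∂μ ≤
        ENNReal.ofReal (B * a k) := by
      intro k
      set c : ℝ := C₁ * t ^ (-(m / 2)) * Real.exp (-C₂ * (k : ℝ) ^ 2) with hc
      have hc0 : 0 ≤ c := by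
        have h3 : (0:ℝ) ≤ t ^ (-(m/2)) := Real.rpow_nonneg ht.le _
        positivity
      have hGle : ∀ y ∈ A k, G t x y ≤ c := by
        intro y hy
        refine (hGbd t ht x y).trans ?_
        rw [hc]
        have hd : (k : ℝ) * r ≤ dist x y := by
          have := hy.2
          simp only [Metric.mem_ball, not_lt] at this
          rwa [dist_comm]
        have hdsq : (k : ℝ) ^ 2 * t ≤ dist x y ^ 2 := by
          have hrt : r ^ 2 = t := Real.sq_sqrt ht.le
          have hk0 : (0:ℝ) ≤ (k : ℝ) * r := by positivity
          nlinarith [(dist_nonneg : (0:ℝ) ≤ dist x y)]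
        have hexp : Real.exp (-C₂ * dist x y ^ 2 / t) ≤ Real.exp (-C₂ * (k : ℝ) ^ 2) := by
          refine Real.exp_le_exp.mpr ?_
          rw [div_le_iff₀ ht]
          nlinarith
        have h3 : (0:ℝ) ≤ C₁ * t ^ (-(m/2)) := by
          have : (0:ℝ) ≤ t ^ (-(m/2)) := Real.rpow_nonneg ht.le _
          positivity
        calc C₁ * t ^ (-(m / 2)) * Real.exp (-C₂ * dist x y ^ 2 / t)
            ≤ C₁ * t ^ (-(m / 2)) * Real.exp (-C₂ * (k : ℝ) ^ 2) :=
              mul_le_mul_of_nonneg_left hexp h3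
          _ = _ := rfl
      calc ∫⁻ y in A k, ENNReal.ofReal (G t x y * |u₀ y| ^ p) ∂μ
          ≤ ∫⁻ y in A k, ENNReal.ofReal c * ENNReal.ofReal (|u₀ y| ^ p) ∂μ := by
            refine setLIntegral_mono (by fun_prop) ?_
            intro y hy
            rw [← ENNReal.ofReal_mul hc0]
            refine ENNReal.ofReal_le_ofReal ?_
            have hup : (0:ℝ) ≤ |u₀ y| ^ p := Real.rpow_nonneg (abs_nonneg _) _
            exact mul_le_mul_of_nonneg_right (hGle y hy) hup
        _ = ENNReal.ofReal c * ∫⁻ y in A k, ENNReal.ofReal (|u₀ y| ^ p) ∂μ :=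
            lintegral_const_mul _ hfpm
        _ ≤ ENNReal.ofReal c * ∫⁻ y in Metric.ball x (((k:ℝ)+1) * r), ENNReal.ofReal (|u₀ y| ^ p) ∂μ :=
            mul_le_mul' le_rfl (lintegral_mono_set Set.diff_subset)
        _ ≤ ENNReal.ofReal c * ENNReal.ofReal (N ^ p * (((k:ℝ)+1) * r) ^ lam) :=
            mul_le_mul' le_rfl (hmor x _ (by positivity))
        _ = ENNReal.ofReal (B * a k) := by
            rw [← ENNReal.ofReal_mul hc0]
            congr 1
            rw [hc, hBdef, ha]
            rw [Real.mul_rpow (by positivity) hr.le]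
            ring
    calc ∫⁻ y, ENNReal.ofReal (G t x y * |u₀ y| ^ p) ∂μ
        = ∫⁻ y in Set.univ, ENNReal.ofReal (G t x y * |u₀ y| ^ p) ∂μ := (setLIntegral_univ _).symm
      _ ≤ ∫⁻ y in ⋃ k, A k, ENNReal.ofReal (G t x y * |u₀ y| ^ p) ∂μ := lintegral_mono_set hcover
      _ ≤ ∑' k, ∫⁻ y in A k, ENNReal.ofReal (G t x y * |u₀ y| ^ p) ∂μ := lintegral_iUnion_le _ _
      _ ≤ ∑' k, ENNReal.ofReal (B * a k) := ENNReal.tsum_le_tsum hterm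
      _ = ENNReal.ofReal (B * S) := by
          rw [← ENNReal.ofReal_tsum_of_nonneg (fun k => mul_nonneg hB0 (hanneg k))
            (haS.mul_left B)]
          rw [hSdef, tsum_mul_left]
  -- Hölder step
  set ν : Measure X := μ.withDensity g with hν
  have hνle : ν Set.univ ≤ 1 := by
    rw [hν, withDensity_apply _ MeasurableSet.univ, Measure.restrict_univ]
    exact hGmarkov t ht x
  have hwd1 := lintegral_withDensity_eq_lintegral_mul μ hgm hfm
  have hwd2 := lintegral_withDensity_eq_lintegral_mul μ hgm hfpm
  calc ∫⁻ y, ENNReal.ofReal (G t x y * |u₀ y|) ∂μ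
      = ∫⁻ y, (g * f) y ∂μ := by
        refine lintegral_congr fun y => ?_
        simp only [Pi.mul_apply, hgdef, hfdef]
        exact ENNReal.ofReal_mul (hG0 t ht x y)
    _ = ∫⁻ y, f y ∂ν := hwd1.symm
    _ ≤ (∫⁻ y, f y ^ p ∂ν) ^ (1 / p) := aux_powmean ν hνle hp f hfm.aemeasurable
    _ = (∫⁻ y, (g * fun y => ENNReal.ofReal (|u₀ y| ^ p)) y ∂μ) ^ (1 / p) := by
        rw [← hwd2]
        congr 1
        refine lintegral_congr fun y => ?_
        rw [hfdef]
        exact (ENNReal.ofReal_rpow_of_nonneg (abs_nonneg _) hp0.le).symm ▸ rfl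
    _ ≤ (ENNReal.ofReal (B * S)) ^ (1 / p) := by
        refine ENNReal.rpow_le_rpow ?_ (by positivity)
        refine le_trans (le_of_eq ?_) key
        refine lintegral_congr fun y => ?_
        simp only [Pi.mul_apply, hgdef]
        rw [← ENNReal.ofReal_mul (hG0 t ht x y)]
    _ = ENNReal.ofReal ((B * S) ^ (1 / p)) :=
        ENNReal.ofReal_rpow_of_nonneg (mul_nonneg hB0 hS0.le) (by positivity)
    _ = ENNReal.ofReal ((C₁ * S) ^ (1 / p) * t ^ (-((m - lam) / (2 * p))) * N) := by
        congr 1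
        have e1 : r ^ lam = t ^ (lam / 2) := by
          rw [hrdef, Real.sqrt_eq_rpow, ← Real.rpow_mul ht.le]
          congr 1
          ring
        have e2 : B * S = (C₁ * S) * (N ^ p) * t ^ ((lam - m) / 2) := by
          have e3 : t ^ (-(m / 2)) * t ^ (lam / 2) = t ^ ((lam - m) / 2) := by
            rw [← Real.rpow_add ht]; congr 1; ring
          calc B * S = (C₁ * S) * (N ^ p) * (t ^ (-(m / 2)) * r ^ lam) := by
                rw [hBdef]; ring
            _ = _ := by rw [e1, e3]
        rw [e2]
        rw [Real.mul_rpow (by positivity) (Real.rpow_nonneg ht.le _),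
          Real.mul_rpow (by positivity) (Real.rpow_nonneg hN _)]
        rw [one_div, Real.rpow_rpow_inv hN hp0.ne']
        rw [← Real.rpow_mul ht.le]
        rw [show (lam - m) / 2 * p⁻¹ = -((m - lam) / (2 * p)) by field_simp; ring]
        ring
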